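/- Let T > 0, let f : ℝ → ℝ be a continuous T-periodic function, and let α ∈ (0,1). If the function t ↦ I^α f(t) is bounded on (0,∞), then I^α f is S-asymptotically T-periodic: it is continuous and bounded on (0,∞) and lim_{t→+∞} [I^α f(t+T) − I^α f(t)] = 0. -/

import Mathlib

open MeasureTheory intervalIntegral Filter Set

/-- If `f` is continuous `T`-periodic, `α ∈ (0,1)` and `I^α f` is bounded on `(0,∞)`,
then `I^α f` is S-asymptotically `T`-periodic: continuous and bounded on `(0,∞)` with
`I^α f (t+T) - I^α f (t) → 0` as `t → +∞`. -/
theorem rl_integral_s_asymptotically_periodic (T : ℝ) (hT : 0 < T)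
    (f : ℝ → ℝ) (hf : Continuous f) (hper : Function.Periodic f T)
    (α : ℝ) (hα : α ∈ Set.Ioo (0 : ℝ) 1)
    (Iαf : ℝ → ℝ)
    (hIαf : ∀ t : ℝ, Iαf t = (1 / Real.Gamma α) * ∫ s in (0 : ℝ)..t, (t - s) ^ (α - 1) * f s)
    (hbdd : ∃ M : ℝ, ∀ t ∈ Ioi (0 : ℝ), |Iαf t| ≤ M) :
    ContinuousOn Iαf (Ioi 0) ∧ (∃ M : ℝ, ∀ t ∈ Ioi (0 : ℝ), |Iαf t| ≤ M) ∧
      Tendsto (fun t : ℝ => Iαf (t + T) - Iαf t) atTop (nhds 0) := by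
  obtain ⟨hα0, hα1⟩ := hα
  have hαexp : (-1 : ℝ) < α - 1 := by linarith
  -- bound on f
  obtain ⟨C, hCr⟩ := isBounded_iff_forall_norm_le.mp
    (hper.isBounded_of_continuous hT.ne' hf)
  have hC : ∀ x, |f x| ≤ C := fun x => hCr _ (mem_range_self x)
  have hC0 : (0 : ℝ) ≤ C := (abs_nonneg _).trans (hC 0)
  -- integrability of the kernel times f on any interval
  have hker : ∀ t a b : ℝ, IntervalIntegrable (fun s => (t - s) ^ (α - 1)) volume a b := by
    intro t a b
    have h := (intervalIntegrable_rpow' (a := t - a) (b := t - b) hαexp).comp_sub_left t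
    simpa using h
  have hint : ∀ t a b : ℝ,
      IntervalIntegrable (fun s => (t - s) ^ (α - 1) * f s) volume a b := by
    intro t a b
    exact (hker t a b).mul_continuousOn hf.continuousOn
  -- continuity
  have hcont : ContinuousOn Iαf (Ioi 0) := by
    set G : ℝ → ℝ := fun t => ∫ u in (0 : ℝ)..1, (1 - u) ^ (α - 1) * f (t * u) with hGdef
    have hG : Continuous G := by
      apply intervalIntegral.continuous_of_dominated_interval
        (bound := fun u => (1 - u) ^ (α - 1) * C)
      · intro t
        have hmeas : MeasurableSet (Ioo (0:ℝ) 1) := measurableSet_Ioo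
        have hco : ContinuousOn (fun u => (1 - u) ^ (α - 1) * f (t * u)) (Ioo 0 1) := by
          apply ContinuousOn.mul
          · exact (continuousOn_const.sub continuousOn_id).rpow_const
              (fun x hx => Or.inl (by
                simp only [Pi.sub_apply, id_eq]
                have h2 := (Set.mem_Ioo.mp hx).2
                intro h; linarith))
          · exact (hf.comp (continuous_const.mul continuous_id)).continuousOn
        have := hco.aestronglyMeasurable (μ := volume) hmeas
        rw [Set.uIoc_of_le (zero_le_one : (0:ℝ) ≤ 1),
          ← Measure.restrict_congr_set Ioo_ae_eq_Ioc]
        exact this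
      · intro t
        filter_upwards with u hu
        rw [Set.uIoc_of_le (zero_le_one)] at hu
        have h1u : (0:ℝ) ≤ 1 - u := by linarith [hu.2]
        rw [norm_mul, Real.norm_eq_abs, Real.norm_eq_abs,
          abs_of_nonneg (Real.rpow_nonneg h1u _)]
        exact mul_le_mul_of_nonneg_left ((Real.norm_eq_abs _ ▸ hC (t * u)))
          (Real.rpow_nonneg h1u _)
      · have h := ((intervalIntegrable_rpow' (a := (1:ℝ)) (b := 0) hαexp).comp_sub_left 1)
        have h' : IntervalIntegrable (fun u : ℝ => (1 - u) ^ (α - 1)) volume 0 1 := by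
          simpa using h
        exact h'.mul_const C
      · filter_upwards with u hu
        rw [Set.uIoc_of_le (zero_le_one)] at hu
        exact continuous_const.mul (hf.comp (continuous_id.mul continuous_const))
    have hrep : ∀ t ∈ Ioi (0:ℝ), Iαf t = (1 / Real.Gamma α) * (t ^ α * G t) := by
      intro t ht
      rw [hIαf]
      congr 1
      have hsub : (∫ u in (0:ℝ)..1, (t - t * u) ^ (α - 1) * f (t * u))
          = t⁻¹ • ∫ s in (0:ℝ)..t, (t - s) ^ (α - 1) * f s := by
        have := intervalIntegral.integral_comp_mul_left
          (a := (0:ℝ)) (b := 1) (fun s => (t - s) ^ (α - 1) * f s) (ne_of_gt ht)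
        simpa using this
      have hcongr : (∫ u in (0:ℝ)..1, (t - t * u) ^ (α - 1) * f (t * u))
          = t ^ (α - 1) * G t := by
        rw [hGdef, ← intervalIntegral.integral_const_mul]
        apply intervalIntegral.integral_congr
        intro u hu
        rw [Set.uIcc_of_le zero_le_one] at hu
        have h1u : (0:ℝ) ≤ 1 - u := by linarith [hu.2]
        show (t - t * u) ^ (α - 1) * f (t * u) = t ^ (α - 1) * ((1 - u) ^ (α - 1) * f (t * u))
        have h2 : t - t * u = t * (1 - u) := by ring
        rw [h2, Real.mul_rpow (le_of_lt ht) h1u]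
        ring
      have ht' : (t:ℝ) ≠ 0 := ne_of_gt ht
      have : (∫ s in (0:ℝ)..t, (t - s) ^ (α - 1) * f s) = t * (t ^ (α - 1) * G t) := by
        rw [← hcongr, hsub, smul_eq_mul]
        field_simp
      rw [this, ← mul_assoc]
      congr 1
      nth_rewrite 1 [← Real.rpow_one t]
      rw [← Real.rpow_add (Set.mem_Ioi.mp ht)]
      norm_num
    refine ContinuousOn.congr ?_ hrep
    exact continuousOn_const.mul
      ((continuousOn_id.rpow_const (fun x hx => Or.inl (ne_of_gt hx))).mul hG.continuousOn)
  refine ⟨hcont, hbdd, ?_⟩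
  -- key identity for the difference
  have key : ∀ t : ℝ, 0 < t → Iαf (t + T) - Iαf t
      = (1 / Real.Gamma α) * ∫ s in (-T)..0, (t - s) ^ (α - 1) * f s := by
    intro t ht
    rw [hIαf, hIαf, ← mul_sub]
    congr 1
    have h1 : (∫ s in (-T)..t, (t - s) ^ (α - 1) * f s)
        = ∫ s in (0:ℝ)..(t + T), (t + T - s) ^ (α - 1) * f s := by
      have h := intervalIntegral.integral_comp_add_right (a := -T) (b := t)
        (fun s => (t + T - s) ^ (α - 1) * f s) T
      rw [neg_add_cancel] at h
      rw [← h]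
      apply intervalIntegral.integral_congr
      intro s _
      have h2 : t + T - (s + T) = t - s := by ring
      simp only [h2, hper s]
    have h3 : (∫ s in (-T)..0, (t - s) ^ (α - 1) * f s)
        + ∫ s in (0:ℝ)..t, (t - s) ^ (α - 1) * f s
        = ∫ s in (-T)..t, (t - s) ^ (α - 1) * f s :=
      intervalIntegral.integral_add_adjacent_intervals (hint t (-T) 0) (hint t 0 t)
    rw [← h1, ← h3]
    ring
  -- bound on the difference
  have hbnd : ∀ t : ℝ, 0 < t →
      ‖Iαf (t + T) - Iαf t‖ ≤ (|1 / Real.Gamma α| * (C * T)) * t ^ (α - 1) := by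
    intro t ht
    rw [key t ht, norm_mul, Real.norm_eq_abs, Real.norm_eq_abs]
    have hb : ∀ s ∈ Set.uIoc (-T) (0:ℝ), ‖(t - s) ^ (α - 1) * f s‖ ≤ t ^ (α - 1) * C := by
      intro s hs
      rw [Set.uIoc_of_le (by linarith : -T ≤ (0:ℝ))] at hs
      have hs1 : s ≤ 0 := hs.2
      have h1 : (t - s) ^ (α - 1) ≤ t ^ (α - 1) :=
        Real.rpow_le_rpow_of_nonpos ht (by linarith) (by linarith)
      have h2 : (0:ℝ) ≤ (t - s) ^ (α - 1) := Real.rpow_nonneg (by linarith) _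
      rw [norm_mul, Real.norm_eq_abs, Real.norm_eq_abs, abs_of_nonneg h2]
      exact mul_le_mul h1 (hC s) (abs_nonneg _) (Real.rpow_nonneg ht.le _)
    have h4 := intervalIntegral.norm_integral_le_of_norm_le_const hb
    rw [Real.norm_eq_abs] at h4
    have h5 : |(0:ℝ) - (-T)| = T := by rw [abs_of_nonneg (by linarith)]; ring
    rw [h5] at h4
    calc |1 / Real.Gamma α| * |∫ s in (-T)..0, (t - s) ^ (α - 1) * f s|
        ≤ |1 / Real.Gamma α| * (t ^ (α - 1) * C * T) :=
          mul_le_mul_of_nonneg_left h4 (abs_nonneg _)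
      _ = (|1 / Real.Gamma α| * (C * T)) * t ^ (α - 1) := by ring
  -- conclusion by squeezing
  have hlim : Tendsto (fun t : ℝ => (|1 / Real.Gamma α| * (C * T)) * t ^ (α - 1))
      atTop (nhds 0) := by
    have h := tendsto_rpow_neg_atTop (y := 1 - α) (by linarith)
    have h' : Tendsto (fun t : ℝ => t ^ (α - 1)) atTop (nhds 0) := by
      simpa [neg_sub] using h
    simpa using h'.const_mul (|1 / Real.Gamma α| * (C * T))
  apply squeeze_zero_norm' _ hlim
  filter_upwards [eventually_gt_atTop 0] with t ht
  exact hbnd t ht
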